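/- Under the conditions (★), set ñ₁ := g^{(1)}_{≥1} and ñ₂ := g^{(1)}_{≥1} ⊕ n₀ where n₀ = a ⊕ (g^{(1)}_0 ∩ g^{(2)}_{≥2}). Then [ñ₂, ñ₂] ⊆ n₂; in particular ñ₂ is a Lie subalgebra of g with ñ₂ = ñ₁ ⊕ n₀ and [ñ₁, n₀] ⊆ ñ₁. -/

import Mathlib

set_option maxHeartbeats 1000000


open Finset in
/-- Uniqueness of components: if a sum of elements of independent submodules lies in a
partial supremum, the components outside vanish. -/
private lemma aux_unique {M : Type*} {ι : Type*} [AddCommGroup M] [Module ℂ M]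
    {p : ι → Submodule ℂ M} (hind : iSupIndep p)
    (s : Finset ι) (c : ι → M) (hc : ∀ i ∈ s, c i ∈ p i)
    (A : Set ι) (hx : (∑ i ∈ s, c i) ∈ ⨆ i ∈ A, p i) :
    ∀ j ∈ s, j ∉ A → c j = 0 := by
  classical
  intro j hj hjA
  have h1 : (∑ i ∈ s, c i) ∈ ⨆ i ∈ {i | i ≠ j}, p i := by
    have hle : (⨆ i ∈ A, p i) ≤ ⨆ i ∈ {i | i ≠ j}, p i :=
      biSup_mono (fun i hi (hij : i = j) => hjA (hij ▸ hi))
    exact hle hx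
  have h2 : (∑ i ∈ s.erase j, c i) ∈ ⨆ i ∈ {i | i ≠ j}, p i := by
    refine Submodule.sum_mem _ fun i hi => ?_
    have hij : i ≠ j := (Finset.mem_erase.mp hi).1
    exact le_biSup p hij (hc i (Finset.mem_of_mem_erase hi))
  have hcj : c j = (∑ i ∈ s, c i) - (∑ i ∈ s.erase j, c i) := by
    rw [eq_sub_iff_add_eq, Finset.add_sum_erase s c hj]
  have hmem : c j ∈ ⨆ i ∈ {i | i ≠ j}, p i := hcj ▸ sub_mem h1 h2
  exact Submodule.disjoint_def.mp (hind j) (c j) (hc j hj) hmem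

open Finset in
/-- Refinement: an element of `gr1 d` lying in a partial supremum of the `gr2` grading lies in
the corresponding supremum of bigraded pieces. -/
private lemma aux_refine {M : Type*} [AddCommGroup M] [Module ℂ M]
    (gr1 gr2 : ℤ → Submodule ℂ M)
    (hind1 : iSupIndep gr1) (hind2 : iSupIndep gr2)
    (htop : (⨆ p : ℤ × ℤ, (gr1 p.1 ⊓ gr2 p.2)) = ⊤)
    (d : ℤ) (S : Set ℤ) {x : M} (hx1 : x ∈ gr1 d) (hx2 : x ∈ ⨆ e ∈ S, gr2 e) :
    x ∈ ⨆ e ∈ S, (gr1 d ⊓ gr2 e) := by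
  classical
  have hxtop : x ∈ ⨆ p : ℤ × ℤ, (gr1 p.1 ⊓ gr2 p.2) := by
    rw [htop]; exact Submodule.mem_top
  rw [Submodule.mem_iSup_iff_exists_finsupp] at hxtop
  obtain ⟨f, hf, hsum⟩ := hxtop
  have key : ∃ (s : Finset (ℤ × ℤ)) (cc : ℤ × ℤ → M),
      (∀ p, cc p ∈ gr1 p.1 ⊓ gr2 p.2) ∧ ∑ p ∈ s, cc p = x := ⟨f.support, f, hf, hsum⟩
  clear hsum hf
  obtain ⟨s, cc, hcc, hsum⟩ := key
  -- Step 1 : `x` is the sum of the components with first coordinate `d`.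
  obtain ⟨c, hcmem, hfib, hcd⟩ : ∃ c : ℤ → M, (∀ q, c q ∈ gr1 q) ∧
      (∑ q ∈ s.image Prod.fst, c q = x) ∧ (c d = ∑ p ∈ s with p.1 = d, cc p) := by
    refine ⟨fun q => ∑ p ∈ s with p.1 = q, cc p, fun q => ?_, ?_, rfl⟩
    · refine Submodule.sum_mem _ fun p hp => ?_
      have h1 : p.1 = q := (Finset.mem_filter.mp hp).2
      exact h1 ▸ (hcc p).1
    · rw [Finset.sum_fiberwise_of_maps_to (fun p hp => Finset.mem_image_of_mem Prod.fst hp)]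
      exact hsum
  have hzero : ∀ q ∈ s.image Prod.fst, q ∉ ({d} : Set ℤ) → c q = 0 := by
    refine aux_unique hind1 _ c (fun q _ => hcmem q) {d} ?_
    rw [hfib]
    exact le_biSup gr1 (Set.mem_singleton d) hx1
  have hxeq : x = ∑ p ∈ s with p.1 = d, cc p := by
    rw [← hcd]
    by_cases hd : d ∈ s.image Prod.fst
    · rw [← hfib]
      refine Finset.sum_eq_single_of_mem d hd fun q hq hqd => hzero q hq ?_
      simpa using hqd
    · have h1 : ∀ q ∈ s.image Prod.fst, c q = 0 := fun q hq =>
        hzero q hq fun h => hd ((Set.mem_singleton_iff.mp h) ▸ hq)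
      have h2 : (s.filter (fun p => p.1 = d)) = ∅ := by
        rw [Finset.filter_eq_empty_iff]
        intro p hp hpd
        exact hd (hpd ▸ Finset.mem_image_of_mem Prod.fst hp)
      rw [← hfib, Finset.sum_eq_zero h1, hcd, h2, Finset.sum_empty]
  -- Step 2 : fiberwise over the second coordinate.
  obtain ⟨c2, hc2mem, hfib2⟩ : ∃ c2 : ℤ → M, (∀ e, c2 e ∈ gr1 d ⊓ gr2 e) ∧
      (∑ e ∈ (s.filter (fun p => p.1 = d)).image Prod.snd, c2 e = x) := by
    have hf2 : ∀ p ∈ s.filter (fun p => p.1 = d), cc p ∈ gr1 d ⊓ gr2 p.2 := by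
      intro p hp
      have h1 : p.1 = d := (Finset.mem_filter.mp hp).2
      exact ⟨h1 ▸ (hcc p).1, (hcc p).2⟩
    refine ⟨fun e => ∑ p ∈ s.filter (fun p => p.1 = d) with p.2 = e, cc p,
      fun e => ?_, ?_⟩
    · refine Submodule.sum_mem _ fun p hp => ?_
      have h2 : p.2 = e := (Finset.mem_filter.mp hp).2
      exact h2 ▸ hf2 p (Finset.mem_filter.mp hp).1
    · rw [Finset.sum_fiberwise_of_maps_to (fun p hp => Finset.mem_image_of_mem Prod.snd hp)]
      exact hxeq.symm
  have hzero2 : ∀ e ∈ (s.filter (fun p => p.1 = d)).image Prod.snd, e ∉ S → c2 e = 0 := by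
    refine aux_unique hind2 _ c2 (fun e _ => (hc2mem e).2) S ?_
    rw [hfib2]
    exact hx2
  rw [← hfib2]
  refine Submodule.sum_mem _ fun e he => ?_
  by_cases heS : e ∈ S
  · exact le_biSup (fun e => gr1 d ⊓ gr2 e) heS (hc2mem e)
  · rw [hzero2 e he heS]
    exact Submodule.zero_mem _

/-- Under the conditions (★), set `ñ₁ := g^{(1)}_{≥1}` and
`ñ₂ := g^{(1)}_{≥1} ⊕ n₀` where `n₀ = a ⊕ (g^{(1)}₀ ∩ g^{(2)}_{≥2})`.  Then
`[ñ₂, ñ₂] ⊆ n₂`; in particular `ñ₂` is a Lie subalgebra of `g` with `ñ₂ = ñ₁ ⊕ n₀` and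
`[ñ₁, n₀] ⊆ ñ₁`. -/
theorem statement11
    (g : Type*) [LieRing g] [LieAlgebra ℂ g] [FiniteDimensional ℂ g]
    [LieAlgebra.IsSimple ℂ g]
    (Φ : g →ₗ[ℂ] g →ₗ[ℂ] ℂ)
    (hsymm : ∀ x y : g, Φ x y = Φ y x)
    (hinv : ∀ x y z : g, Φ ⁅x, y⁆ z = Φ x ⁅y, z⁆)
    (hnondeg : ∀ x : g, (∀ y : g, Φ x y = 0) → x = 0)
    (gr1 gr2 : ℤ → Submodule ℂ g)
    (hdec1 : DirectSum.IsInternal fun δ : ℤ => gr1 δ)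
    (hdec2 : DirectSum.IsInternal fun δ : ℤ => gr2 δ)
    (hbidec : DirectSum.IsInternal fun p : ℤ × ℤ => gr1 p.1 ⊓ gr2 p.2)
    (hbr1 : ∀ δ₁ δ₂ : ℤ, ∀ x ∈ gr1 δ₁, ∀ y ∈ gr1 δ₂, ⁅x, y⁆ ∈ gr1 (δ₁ + δ₂))
    (hbr2 : ∀ δ₁ δ₂ : ℤ, ∀ x ∈ gr2 δ₁, ∀ y ∈ gr2 δ₂, ⁅x, y⁆ ∈ gr2 (δ₁ + δ₂))
    (f1 f2 : g) (hf1 : f1 ∈ gr1 (-2)) (hf2 : f2 ∈ gr2 (-2))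
    (hgood1inj : ∀ δ : ℤ, 1 ≤ δ → ∀ x ∈ gr1 δ, ⁅f1, x⁆ = 0 → x = 0)
    (hgood1surj : ∀ δ : ℤ, δ ≤ 1 → ∀ y ∈ gr1 (δ - 2), ∃ x ∈ gr1 δ, ⁅f1, x⁆ = y)
    (hgood2inj : ∀ δ : ℤ, 1 ≤ δ → ∀ x ∈ gr2 δ, ⁅f2, x⁆ = 0 → x = 0)
    (hgood2surj : ∀ δ : ℤ, δ ≤ 1 → ∀ y ∈ gr2 (δ - 2), ∃ x ∈ gr2 δ, ⁅f2, x⁆ = y)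
    (hstar1 : (⨆ d : ℤ, ⨆ _ : (2 : ℤ) ≤ d, gr1 d) ≤ ⨆ d : ℤ, ⨆ _ : (1 : ℤ) ≤ d, gr2 d)
    (hstar2 : (⨆ d : ℤ, ⨆ _ : (1 : ℤ) ≤ d, gr2 d) ≤ ⨆ d : ℤ, ⨆ _ : (0 : ℤ) ≤ d, gr1 d)
    (hstar3 : gr1 1 ≤ (gr1 1 ⊓ gr2 0) ⊔ (gr1 1 ⊓ gr2 1) ⊔ (gr1 1 ⊓ gr2 2))
    (hstar4 : gr2 1 ≤ (gr2 1 ⊓ gr1 0) ⊔ (gr2 1 ⊓ gr1 1) ⊔ (gr2 1 ⊓ gr1 2))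
    (hstar5 : f2 - f1 ∈ gr1 0 ⊓ gr2 (-2))
    (aa : Submodule ℂ g)
    (ha1 : aa ≤ (gr2 1 ⊓ gr1 0) ⊓ LinearMap.ker (LieAlgebra.ad ℂ g f1 : g →ₗ[ℂ] g))
    (ha2 : ∀ u ∈ aa ⊔ (gr2 1 ⊓ gr1 2), ∀ v ∈ aa ⊔ (gr2 1 ⊓ gr1 2), Φ f2 ⁅u, v⁆ = 0)
    (ha3 : {v : g | v ∈ gr2 1 ∧ ∀ u ∈ aa ⊔ (gr2 1 ⊓ gr1 2), Φ f2 ⁅v, u⁆ = 0}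
        = ↑(aa ⊔ (gr2 1 ⊓ gr1 1) ⊔ (gr2 1 ⊓ gr1 2)))
    (n0 n1 n2 : Submodule ℂ g)
    (hn0 : n0 = aa ⊔ (gr1 0 ⊓ (⨆ d : ℤ, ⨆ _ : (2 : ℤ) ≤ d, gr2 d)))
    (hn1 : n1 = ((gr1 1 ⊓ gr2 1) ⊔ (gr1 1 ⊓ gr2 2)) ⊔ (⨆ d : ℤ, ⨆ _ : (2 : ℤ) ≤ d, gr1 d))
    (hn2 : n2 = (aa ⊔ (gr1 1 ⊓ gr2 1) ⊔ (gr1 2 ⊓ gr2 1)) ⊔ (⨆ d : ℤ, ⨆ _ : (2 : ℤ) ≤ d, gr2 d))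
    (nt1 nt2 : Submodule ℂ g)
    (hnt1 : nt1 = ⨆ d : ℤ, ⨆ _ : (1 : ℤ) ≤ d, gr1 d)
    (hnt2 : nt2 = nt1 ⊔ n0)
    :
    -- `[ñ₂, ñ₂] ⊆ n₂`
    (∀ x ∈ nt2, ∀ y ∈ nt2, ⁅x, y⁆ ∈ n2) ∧
    -- `ñ₂` is a Lie subalgebra
    (∀ x ∈ nt2, ∀ y ∈ nt2, ⁅x, y⁆ ∈ nt2) ∧
    -- `ñ₂ = ñ₁ ⊕ n₀`
    nt1 ⊓ n0 = ⊥ ∧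
    -- `[ñ₁, n₀] ⊆ ñ₁`
    (∀ x ∈ nt1, ∀ y ∈ n0, ⁅x, y⁆ ∈ nt1) := by
  classical
  have hind1 : iSupIndep gr1 := hdec1.submodule_iSupIndep
  have hind2 : iSupIndep gr2 := hdec2.submodule_iSupIndep
  have htopbi : (⨆ p : ℤ × ℤ, (gr1 p.1 ⊓ gr2 p.2)) = ⊤ := hbidec.submodule_iSup_eq_top
  -- a helper for membership in prop-bounded suprema
  have hle : ∀ (gr : ℤ → Submodule ℂ g) (P : ℤ → Prop) (d : ℤ), P d →
      gr d ≤ ⨆ e, ⨆ _ : P e, gr e := fun gr P d hd => le_iSup_of_le d (le_iSup_of_le hd le_rfl)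
  -- basic inclusions
  have haa0 : aa ≤ gr1 0 := ha1.trans (inf_le_left.trans inf_le_right)
  have haa1 : aa ≤ gr2 1 := ha1.trans (inf_le_left.trans inf_le_left)
  have hn0le1 : n0 ≤ gr1 0 := by
    rw [hn0]; exact sup_le haa0 inf_le_left
  have hG2n2 : (⨆ d : ℤ, ⨆ _ : (2 : ℤ) ≤ d, gr2 d) ≤ n2 := by rw [hn2]; exact le_sup_right
  have haan2 : aa ≤ n2 := by
    rw [hn2]; exact (le_sup_left.trans le_sup_left).trans le_sup_left
  have hn0len2 : n0 ≤ n2 := by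
    rw [hn0]; exact sup_le haan2 (inf_le_right.trans hG2n2)
  have hnt1lent2 : nt1 ≤ nt2 := by rw [hnt2]; exact le_sup_left
  have hn0lent2 : n0 ≤ nt2 := by rw [hnt2]; exact le_sup_right
  have hgr1nt1 : ∀ d : ℤ, 1 ≤ d → gr1 d ≤ nt1 := by
    intro d hd; rw [hnt1]; exact hle gr1 _ d hd
  -- claim 4 : `[ñ₁, n₀] ⊆ ñ₁`
  have claim4 : ∀ x ∈ nt1, ∀ y ∈ n0, ⁅x, y⁆ ∈ nt1 := by
    intro x hx y hy
    have hy0 : y ∈ gr1 0 := hn0le1 hy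
    rw [hnt1] at hx
    refine Submodule.iSup_induction (motive := fun z => ⁅z, y⁆ ∈ nt1)
      (fun d : ℤ => ⨆ _ : (1 : ℤ) ≤ d, gr1 d) hx (fun d z hz => ?_) ?_ ?_
    · show ⁅z, y⁆ ∈ nt1
      have hz' : z ∈ ⨆ _ : (1 : ℤ) ≤ d, gr1 d := hz
      by_cases hd : (1 : ℤ) ≤ d
      · rw [iSup_pos hd] at hz'
        have hb := hbr1 d 0 z hz' y hy0
        rw [add_zero] at hb
        exact hgr1nt1 d hd hb
      · rw [iSup_neg hd] at hz'
        rw [(Submodule.mem_bot ℂ).mp hz', zero_lie]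
        exact Submodule.zero_mem _
    · show ⁅(0 : g), y⁆ ∈ nt1
      rw [zero_lie]; exact Submodule.zero_mem _
    · intro a b ha hb
      show ⁅a + b, y⁆ ∈ nt1
      rw [add_lie]; exact Submodule.add_mem _ ha hb
  -- claim 3 : `ñ₁ ⊓ n₀ = ⊥`
  have claim3 : nt1 ⊓ n0 = ⊥ := by
    rw [eq_bot_iff]
    intro x hx
    have hx0 : x ∈ gr1 0 := hn0le1 hx.2
    have hx1 : x ∈ ⨆ d ∈ {d : ℤ | d ≠ 0}, gr1 d := by
      have h1 : nt1 ≤ ⨆ d ∈ {d : ℤ | d ≠ 0}, gr1 d := by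
        rw [hnt1]
        exact iSup_le fun d => iSup_le fun hd =>
          hle gr1 (fun e => e ∈ {d : ℤ | d ≠ 0}) d (by intro h; omega)
      exact h1 hx.1
    have hdisj := hind1.disjoint_biSup (x := (0 : ℤ)) (y := {d : ℤ | d ≠ 0}) (by simp)
    rw [Submodule.mem_bot]
    exact Submodule.disjoint_def.mp hdisj x hx0 hx1
  -- the landing lemma
  have keyB : ∀ D e : ℤ, ((1 ≤ D ∧ 0 ≤ e ∧ 2 ≤ D + e) ∨ (D = 0 ∧ 2 ≤ e)) →
      gr1 D ⊓ gr2 e ≤ n2 ⊓ nt2 := by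
    intro D e hDe
    rcases hDe with ⟨hD, he, hsum⟩ | ⟨hD0, he2⟩
    · refine le_inf ?_ (inf_le_left.trans ((hgr1nt1 D hD).trans hnt1lent2))
      rcases lt_or_ge e 2 with he2 | he2
      · have : e = 0 ∨ e = 1 := by omega
        rcases this with rfl | rfl
        · -- e = 0, so D ≥ 2 and the piece is trivial
          intro x hx
          have hD2 : (2 : ℤ) ≤ D := by omega
          have hxle : x ∈ ⨆ d : ℤ, ⨆ _ : (1 : ℤ) ≤ d, gr2 d :=
            hstar1 (hle gr1 (fun d => (2 : ℤ) ≤ d) D hD2 hx.1)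
          have hx1' : x ∈ ⨆ d ∈ {d : ℤ | d ≠ 0}, gr2 d := by
            have h1 : (⨆ d : ℤ, ⨆ _ : (1 : ℤ) ≤ d, gr2 d) ≤ ⨆ d ∈ {d : ℤ | d ≠ 0}, gr2 d :=
              iSup_le fun d => iSup_le fun hd =>
                hle gr2 (fun e => e ∈ {d : ℤ | d ≠ 0}) d (by intro h; omega)
            exact h1 hxle
          have hdisj := hind2.disjoint_biSup (x := (0 : ℤ)) (y := {d : ℤ | d ≠ 0}) (by simp)
          have hx0 : x = 0 := Submodule.disjoint_def.mp hdisj x hx.2 hx1'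
          rw [hx0]; exact Submodule.zero_mem _
        · -- e = 1
          have hD3 : D = 1 ∨ D = 2 ∨ 3 ≤ D := by omega
          rcases hD3 with rfl | rfl | hD3
          · rw [hn2]
            exact ((le_sup_right.trans le_sup_left).trans le_sup_left :
              gr1 1 ⊓ gr2 1 ≤ _)
          · rw [hn2]
            exact (le_sup_right.trans le_sup_left :
              gr1 2 ⊓ gr2 1 ≤ _)
          · intro x hx
            have hx4 := hstar4 hx.2
            have h1 : (gr2 1 ⊓ gr1 0) ⊔ (gr2 1 ⊓ gr1 1) ⊔ (gr2 1 ⊓ gr1 2) ≤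
                ⨆ d ∈ {d : ℤ | d ≠ D}, gr1 d := by
              refine sup_le (sup_le ?_ ?_) ?_ <;>
                exact inf_le_right.trans
                  (hle gr1 (fun e => e ∈ {d : ℤ | d ≠ D}) _ (by intro h; omega))
            have hdisj := hind1.disjoint_biSup (x := D) (y := {d : ℤ | d ≠ D}) (by simp)
            have hx0 : x = 0 := Submodule.disjoint_def.mp hdisj x hx.1 (h1 hx4)
            rw [hx0]; exact Submodule.zero_mem _
      · exact inf_le_right.trans ((hle gr2 (fun d => (2 : ℤ) ≤ d) e he2).trans hG2n2)
    · -- D = 0 and e ≥ 2 : the piece sits inside n0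
      subst hD0
      have h1 : gr1 0 ⊓ gr2 e ≤ n0 := by
        rw [hn0]
        exact le_sup_right.trans'
          (inf_le_inf_left _ (hle gr2 (fun d => (2 : ℤ) ≤ d) e he2))
      exact le_inf (h1.trans hn0len2) (h1.trans hn0lent2)
  -- the decomposition of nt2 into bigraded pieces
  have keyA : nt2 ≤ ⨆ p : ℤ × ℤ,
      ⨆ _ : (1 ≤ p.1 ∧ 0 ≤ p.2) ∨ (p.1 = 0 ∧ 1 ≤ p.2), (gr1 p.1 ⊓ gr2 p.2) := by
    set U : ℤ × ℤ → Prop := fun p => (1 ≤ p.1 ∧ 0 ≤ p.2) ∨ (p.1 = 0 ∧ 1 ≤ p.2) with hU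
    have hpc : ∀ p : ℤ × ℤ, U p →
        gr1 p.1 ⊓ gr2 p.2 ≤ ⨆ p : ℤ × ℤ, ⨆ _ : U p, (gr1 p.1 ⊓ gr2 p.2) :=
      fun p hp => le_iSup_of_le p (le_iSup_of_le hp le_rfl)
    rw [hnt2]
    refine sup_le ?_ ?_
    · -- nt1
      rw [hnt1]
      refine iSup_le fun d => iSup_le fun hd => ?_
      rcases eq_or_lt_of_le hd with heq | hlt
      · -- d = 1 : use hstar3
        rw [← heq]
        refine hstar3.trans (sup_le (sup_le ?_ ?_) ?_)
        · exact hpc (1, 0) (Or.inl ⟨le_refl 1, le_refl 0⟩)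
        · exact hpc (1, 1) (Or.inl ⟨le_refl 1, by omega⟩)
        · exact hpc (1, 2) (Or.inl ⟨le_refl 1, by omega⟩)
      · -- d ≥ 2 : use hstar1 and the refinement lemma
        intro x hx
        have hd2 : (2 : ℤ) ≤ d := hlt
        have hx2 : x ∈ ⨆ e ∈ {e : ℤ | 1 ≤ e}, gr2 e :=
          hstar1 (hle gr1 (fun d => (2 : ℤ) ≤ d) d hd2 hx)
        have hx3 := aux_refine gr1 gr2 hind1 hind2 htopbi d {e : ℤ | 1 ≤ e} hx hx2
        have h4 : (⨆ e ∈ {e : ℤ | 1 ≤ e}, (gr1 d ⊓ gr2 e)) ≤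
            ⨆ p : ℤ × ℤ, ⨆ _ : U p, (gr1 p.1 ⊓ gr2 p.2) :=
          iSup_le fun e => iSup_le fun he => hpc (d, e) (Or.inl ⟨by omega, by
            have : (1 : ℤ) ≤ e := he
            omega⟩)
        exact h4 hx3
    · -- n0
      rw [hn0]
      refine sup_le ?_ ?_
      · refine le_trans ?_ (hpc (0, 1) (Or.inr ⟨rfl, le_refl 1⟩))
        exact le_inf haa0 haa1
      · intro x hx
        have hx3 := aux_refine gr1 gr2 hind1 hind2 htopbi 0 {e : ℤ | 2 ≤ e} hx.1 hx.2
        have h4 : (⨆ e ∈ {e : ℤ | 2 ≤ e}, (gr1 0 ⊓ gr2 e)) ≤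
            ⨆ p : ℤ × ℤ, ⨆ _ : U p, (gr1 p.1 ⊓ gr2 p.2) :=
          iSup_le fun e => iSup_le fun he => hpc (0, e) (Or.inr ⟨rfl, by
            have : (2 : ℤ) ≤ e := he
            omega⟩)
        exact h4 hx3
  -- the main computation
  have main : ∀ x ∈ nt2, ∀ y ∈ nt2, ⁅x, y⁆ ∈ n2 ⊓ nt2 := by
    intro x hx y hy
    have hx' := keyA hx
    have hy' := keyA hy
    clear hx hy
    refine Submodule.iSup_induction (motive := fun z => ⁅z, y⁆ ∈ n2 ⊓ nt2)
      (fun p : ℤ × ℤ => ⨆ _ : (1 ≤ p.1 ∧ 0 ≤ p.2) ∨ (p.1 = 0 ∧ 1 ≤ p.2),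
        (gr1 p.1 ⊓ gr2 p.2)) hx' (fun p z hz => ?_) ?_ ?_
    · show ⁅z, y⁆ ∈ n2 ⊓ nt2
      have hz' : z ∈ ⨆ _ : (1 ≤ p.1 ∧ 0 ≤ p.2) ∨ (p.1 = 0 ∧ 1 ≤ p.2),
          (gr1 p.1 ⊓ gr2 p.2) := hz
      by_cases hpU : (1 ≤ p.1 ∧ 0 ≤ p.2) ∨ (p.1 = 0 ∧ 1 ≤ p.2)
      · rw [iSup_pos hpU] at hz'
        refine Submodule.iSup_induction (motive := fun w => ⁅z, w⁆ ∈ n2 ⊓ nt2)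
          (fun q : ℤ × ℤ => ⨆ _ : (1 ≤ q.1 ∧ 0 ≤ q.2) ∨ (q.1 = 0 ∧ 1 ≤ q.2),
            (gr1 q.1 ⊓ gr2 q.2)) hy' (fun q w hw => ?_) ?_ ?_
        · show ⁅z, w⁆ ∈ n2 ⊓ nt2
          have hw' : w ∈ ⨆ _ : (1 ≤ q.1 ∧ 0 ≤ q.2) ∨ (q.1 = 0 ∧ 1 ≤ q.2),
              (gr1 q.1 ⊓ gr2 q.2) := hw
          by_cases hqU : (1 ≤ q.1 ∧ 0 ≤ q.2) ∨ (q.1 = 0 ∧ 1 ≤ q.2)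
          · rw [iSup_pos hqU] at hw'
            have hbr : ⁅z, w⁆ ∈ gr1 (p.1 + q.1) ⊓ gr2 (p.2 + q.2) :=
              ⟨hbr1 _ _ z hz'.1 w hw'.1, hbr2 _ _ z hz'.2 w hw'.2⟩
            refine keyB (p.1 + q.1) (p.2 + q.2) ?_ hbr
            omega
          · rw [iSup_neg hqU] at hw'
            rw [(Submodule.mem_bot ℂ).mp hw', lie_zero]
            exact Submodule.zero_mem _
        · show ⁅z, (0 : g)⁆ ∈ n2 ⊓ nt2
          rw [lie_zero]; exact Submodule.zero_mem _
        · intro a b ha hb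
          show ⁅z, a + b⁆ ∈ n2 ⊓ nt2
          rw [lie_add]; exact Submodule.add_mem _ ha hb
      · rw [iSup_neg hpU] at hz'
        rw [(Submodule.mem_bot ℂ).mp hz', zero_lie]
        exact Submodule.zero_mem _
    · show ⁅(0 : g), y⁆ ∈ n2 ⊓ nt2
      rw [zero_lie]; exact Submodule.zero_mem _
    · intro a b ha hb
      show ⁅a + b, y⁆ ∈ n2 ⊓ nt2
      rw [add_lie]; exact Submodule.add_mem _ ha hb
  exact ⟨fun x hx y hy => (main x hx y hy).1,
    fun x hx y hy => (main x hx y hy).2, claim3, claim4⟩
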